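/- (Lemma 4.2, case (3,15).) For all nonnegative integers r and s: if r + s = 14 and r ≠ 13, then there exists a solution to HWP*(15; 3^r, 15^s); conversely, if a solution to HWP*(15; 3^r, 15^s) exists, then r + s = 14. -/
import Mathlib

/-- A solution to the directed Hamilton–Waterloo problem HWP*(v; m^r, n^s):
a family of `r + s` permutations of `Fin v`, the first `r` of which are
fixed-point-free with all cycles of length `m` (i.e. every point has minimal
period `m`), the last `s` fixed-point-free with all cycles of length `n`,
such that for every ordered pair of distinct vertices `(x, y)` there is exactly
one index `i` with `σ i x = y`. -/
def HWPStarSolution (v m n r s : ℕ) : Prop :=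
  ∃ σ : Fin (r + s) → Equiv.Perm (Fin v),
    (∀ i : Fin (r + s), (i : ℕ) < r → ∀ x : Fin v, Function.minimalPeriod ⇑(σ i) x = m) ∧
    (∀ i : Fin (r + s), r ≤ (i : ℕ) → ∀ x : Fin v, Function.minimalPeriod ⇑(σ i) x = n) ∧
    (∀ x y : Fin v, x ≠ y → ∃! i : Fin (r + s), σ i x = y)

private def mkP (f g : Fin 15 → Fin 15) (h1 : ∀ x, g (f x) = x) (h2 : ∀ x, f (g x) = x) :
    Equiv.Perm (Fin 15) := ⟨f, g, h1, h2⟩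

private lemma per3 (f : Equiv.Perm (Fin 15)) (x : Fin 15)
    (h3 : (⇑f)^[3] x = x) (h1 : f x ≠ x) : Function.minimalPeriod ⇑f x = 3 := by
  have hp : Function.IsPeriodicPt ⇑f 3 x := h3
  have hdvd : Function.minimalPeriod ⇑f x ∣ 3 := hp.minimalPeriod_dvd
  have hpos : 0 < Function.minimalPeriod ⇑f x := hp.minimalPeriod_pos (by norm_num)
  have hle : Function.minimalPeriod ⇑f x ≤ 3 := Nat.le_of_dvd (by norm_num) hdvd
  interval_cases h : Function.minimalPeriod ⇑f x
  · exact absurd (Function.minimalPeriod_eq_one_iff_isFixedPt.mp h) h1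
  · exact absurd hdvd (by decide)
  · rfl

private lemma per15 (f : Equiv.Perm (Fin 15)) (x : Fin 15)
    (hh : (⇑f)^[15] x = x) (h1 : f x ≠ x) (h3 : (⇑f)^[3] x ≠ x) (h5 : (⇑f)^[5] x ≠ x) :
    Function.minimalPeriod ⇑f x = 15 := by
  have hp : Function.IsPeriodicPt ⇑f 15 x := hh
  have hdvd : Function.minimalPeriod ⇑f x ∣ 15 := hp.minimalPeriod_dvd
  have hpos : 0 < Function.minimalPeriod ⇑f x := hp.minimalPeriod_pos (by norm_num)
  have hle : Function.minimalPeriod ⇑f x ≤ 15 := Nat.le_of_dvd (by norm_num) hdvd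
  have hper : (⇑f)^[Function.minimalPeriod ⇑f x] x = x :=
    Function.isPeriodicPt_minimalPeriod ⇑f x
  interval_cases h : Function.minimalPeriod ⇑f x <;>
    first
      | rfl
      | (exact absurd hdvd (by decide))
      | (exact absurd (Function.minimalPeriod_eq_one_iff_isFixedPt.mp h) h1)
      | (exact absurd hper h3)
      | (exact absurd hper h5)

private def sol0 : Fin 14 → Equiv.Perm (Fin 15) :=
  ![mkP ![2, 6, 11, 8, 3, 0, 10, 5, 12, 7, 13, 1, 14, 4, 9] ![5, 11, 0, 4, 13, 7, 1, 9, 3, 14, 6, 2, 8, 10, 12] (by decide) (by decide),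
    mkP ![10, 14, 13, 9, 2, 12, 0, 11, 7, 5, 8, 4, 1, 3, 6] ![6, 12, 4, 13, 11, 9, 14, 8, 10, 3, 0, 7, 5, 2, 1] (by decide) (by decide),
    mkP ![7, 3, 1, 5, 13, 14, 11, 9, 0, 2, 6, 12, 4, 8, 10] ![8, 2, 9, 1, 12, 3, 10, 0, 13, 7, 14, 6, 11, 4, 5] (by decide) (by decide),
    mkP ![3, 8, 9, 2, 10, 7, 1, 6, 14, 11, 0, 13, 5, 12, 4] ![10, 6, 3, 0, 14, 12, 7, 5, 1, 2, 4, 9, 13, 11, 8] (by decide) (by decide),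
    mkP ![8, 10, 7, 12, 1, 3, 14, 4, 9, 13, 11, 6, 0, 2, 5] ![12, 4, 13, 5, 7, 14, 11, 2, 0, 8, 1, 10, 3, 9, 6] (by decide) (by decide),
    mkP ![5, 12, 8, 7, 11, 9, 4, 1, 10, 6, 3, 2, 13, 14, 0] ![14, 7, 11, 10, 6, 0, 9, 3, 2, 5, 8, 4, 1, 12, 13] (by decide) (by decide),
    mkP ![14, 5, 10, 4, 8, 6, 2, 13, 1, 0, 12, 3, 7, 9, 11] ![9, 8, 6, 11, 3, 1, 5, 12, 4, 13, 2, 14, 10, 7, 0] (by decide) (by decide),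
    mkP ![12, 9, 6, 0, 7, 1, 13, 10, 4, 14, 5, 8, 2, 11, 3] ![3, 5, 12, 14, 8, 10, 2, 4, 11, 1, 7, 13, 0, 6, 9] (by decide) (by decide),
    mkP ![13, 4, 12, 10, 14, 11, 3, 0, 5, 1, 2, 9, 8, 6, 7] ![7, 9, 10, 6, 1, 8, 13, 14, 12, 11, 3, 5, 2, 0, 4] (by decide) (by decide),
    mkP ![4, 11, 14, 6, 12, 2, 5, 3, 13, 8, 7, 0, 9, 10, 1] ![11, 14, 5, 7, 0, 6, 3, 10, 9, 12, 13, 1, 4, 8, 2] (by decide) (by decide),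
    mkP ![1, 2, 3, 13, 0, 10, 9, 8, 11, 4, 14, 5, 6, 7, 12] ![4, 0, 1, 2, 9, 11, 12, 13, 7, 6, 5, 8, 14, 3, 10] (by decide) (by decide),
    mkP ![9, 0, 5, 11, 6, 13, 7, 12, 2, 10, 4, 14, 3, 1, 8] ![1, 13, 8, 12, 10, 2, 4, 6, 14, 0, 9, 3, 7, 5, 11] (by decide) (by decide),
    mkP ![11, 13, 4, 1, 5, 8, 12, 14, 6, 3, 9, 7, 10, 0, 2] ![13, 3, 14, 9, 2, 4, 8, 11, 5, 10, 12, 0, 6, 1, 7] (by decide) (by decide),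
    mkP ![6, 7, 0, 14, 9, 4, 8, 2, 3, 12, 1, 10, 11, 5, 13] ![2, 10, 7, 8, 5, 13, 0, 1, 6, 4, 11, 12, 9, 14, 3] (by decide) (by decide)]

private lemma hwp0 : HWPStarSolution 15 3 15 0 14 := by
  have h3 : ∀ i : Fin 14, (i : ℕ) < 0 → ∀ x : Fin 15,
      (⇑(sol0 i))^[3] x = x ∧ sol0 i x ≠ x := by decide
  have h15 : ∀ i : Fin 14, 0 ≤ (i : ℕ) → ∀ x : Fin 15,
      (⇑(sol0 i))^[15] x = x ∧ sol0 i x ≠ x ∧ (⇑(sol0 i))^[3] x ≠ x ∧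
        (⇑(sol0 i))^[5] x ≠ x := by decide
  have hu : ∀ x y : Fin 15, x ≠ y → ∃ i : Fin 14, sol0 i x = y ∧ ∀ j : Fin 14, sol0 j x = y → j = i := by decide
  exact ⟨sol0, fun i hi x => per3 _ x (h3 i hi x).1 (h3 i hi x).2,
    fun i hi x => per15 _ x (h15 i hi x).1 (h15 i hi x).2.1 (h15 i hi x).2.2.1
      (h15 i hi x).2.2.2, fun x y hxy => hu x y hxy⟩

private def sol1 : Fin 14 → Equiv.Perm (Fin 15) :=
  ![mkP ![2, 4, 11, 9, 8, 13, 5, 10, 1, 14, 12, 0, 7, 6, 3] ![11, 8, 0, 14, 1, 6, 13, 12, 4, 3, 7, 2, 10, 5, 9] (by decide) (by decide),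
    mkP ![12, 13, 3, 6, 11, 9, 4, 0, 2, 8, 5, 14, 1, 10, 7] ![7, 12, 8, 2, 6, 10, 3, 14, 9, 5, 13, 4, 0, 1, 11] (by decide) (by decide),
    mkP ![9, 5, 14, 10, 2, 0, 11, 8, 6, 13, 7, 1, 3, 4, 12] ![5, 11, 4, 12, 13, 1, 8, 10, 7, 0, 3, 6, 14, 9, 2] (by decide) (by decide),
    mkP ![3, 6, 9, 13, 10, 4, 14, 11, 7, 12, 8, 2, 0, 1, 5] ![12, 13, 11, 0, 5, 14, 1, 8, 10, 2, 4, 7, 9, 3, 6] (by decide) (by decide),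
    mkP ![5, 7, 6, 4, 0, 14, 10, 2, 11, 1, 3, 12, 9, 8, 13] ![4, 9, 7, 10, 3, 0, 2, 1, 13, 12, 6, 8, 11, 14, 5] (by decide) (by decide),
    mkP ![4, 12, 13, 1, 14, 10, 8, 3, 5, 2, 9, 7, 6, 0, 11] ![13, 3, 9, 7, 0, 8, 12, 11, 6, 10, 5, 14, 1, 2, 4] (by decide) (by decide),
    mkP ![13, 3, 7, 0, 5, 6, 9, 1, 12, 10, 14, 8, 4, 11, 2] ![3, 7, 14, 1, 12, 4, 5, 2, 11, 6, 9, 13, 8, 0, 10] (by decide) (by decide),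
    mkP ![1, 11, 12, 5, 3, 7, 2, 13, 14, 6, 0, 4, 8, 9, 10] ![10, 0, 6, 4, 11, 3, 9, 5, 12, 13, 14, 1, 2, 7, 8] (by decide) (by decide),
    mkP ![6, 14, 8, 12, 7, 11, 3, 5, 10, 0, 1, 9, 13, 2, 4] ![9, 10, 13, 6, 14, 7, 0, 4, 2, 11, 8, 5, 3, 12, 1] (by decide) (by decide),
    mkP ![14, 10, 0, 7, 13, 12, 1, 6, 9, 4, 11, 5, 2, 3, 8] ![2, 6, 12, 13, 9, 11, 7, 3, 14, 8, 1, 10, 5, 4, 0] (by decide) (by decide),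
    mkP ![10, 8, 1, 11, 9, 2, 7, 4, 3, 5, 6, 13, 14, 12, 0] ![14, 2, 5, 8, 7, 9, 10, 6, 1, 4, 0, 3, 13, 11, 12] (by decide) (by decide),
    mkP ![7, 2, 10, 14, 12, 8, 13, 9, 0, 3, 4, 6, 11, 5, 1] ![8, 14, 1, 9, 10, 13, 11, 0, 5, 7, 2, 12, 4, 6, 3] (by decide) (by decide),
    mkP ![8, 0, 5, 2, 6, 1, 12, 14, 4, 11, 13, 3, 10, 7, 9] ![1, 5, 3, 11, 8, 2, 4, 13, 0, 14, 12, 9, 6, 10, 7] (by decide) (by decide),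
    mkP ![11, 9, 4, 8, 1, 3, 0, 12, 13, 7, 2, 10, 5, 14, 6] ![6, 4, 10, 5, 2, 12, 14, 9, 3, 1, 11, 0, 7, 8, 13] (by decide) (by decide)]

private lemma hwp1 : HWPStarSolution 15 3 15 1 13 := by
  have h3 : ∀ i : Fin 14, (i : ℕ) < 1 → ∀ x : Fin 15,
      (⇑(sol1 i))^[3] x = x ∧ sol1 i x ≠ x := by decide
  have h15 : ∀ i : Fin 14, 1 ≤ (i : ℕ) → ∀ x : Fin 15,
      (⇑(sol1 i))^[15] x = x ∧ sol1 i x ≠ x ∧ (⇑(sol1 i))^[3] x ≠ x ∧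
        (⇑(sol1 i))^[5] x ≠ x := by decide
  have hu : ∀ x y : Fin 15, x ≠ y → ∃ i : Fin 14, sol1 i x = y ∧ ∀ j : Fin 14, sol1 j x = y → j = i := by decide
  exact ⟨sol1, fun i hi x => per3 _ x (h3 i hi x).1 (h3 i hi x).2,
    fun i hi x => per15 _ x (h15 i hi x).1 (h15 i hi x).2.1 (h15 i hi x).2.2.1
      (h15 i hi x).2.2.2, fun x y hxy => hu x y hxy⟩

private def sol2 : Fin 14 → Equiv.Perm (Fin 15) :=
  ![mkP ![2, 4, 11, 9, 8, 13, 5, 10, 1, 14, 12, 0, 7, 6, 3] ![11, 8, 0, 14, 1, 6, 13, 12, 4, 3, 7, 2, 10, 5, 9] (by decide) (by decide),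
    mkP ![3, 14, 6, 12, 13, 1, 11, 9, 4, 10, 7, 2, 0, 8, 5] ![12, 5, 11, 0, 8, 14, 2, 10, 13, 7, 9, 6, 3, 4, 1] (by decide) (by decide),
    mkP ![6, 7, 0, 8, 1, 3, 4, 13, 12, 5, 2, 9, 10, 14, 11] ![2, 4, 10, 5, 6, 9, 0, 1, 3, 11, 12, 14, 8, 7, 13] (by decide) (by decide),
    mkP ![4, 6, 7, 2, 11, 9, 3, 8, 10, 1, 14, 12, 5, 0, 13] ![13, 9, 3, 6, 0, 12, 1, 2, 7, 5, 8, 4, 11, 14, 10] (by decide) (by decide),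
    mkP ![14, 0, 10, 7, 5, 12, 13, 11, 9, 4, 8, 6, 3, 1, 2] ![1, 13, 14, 12, 9, 4, 11, 3, 10, 8, 2, 7, 5, 6, 0] (by decide) (by decide),
    mkP ![12, 8, 9, 13, 2, 11, 10, 0, 3, 7, 5, 1, 14, 4, 6] ![7, 11, 4, 8, 13, 10, 14, 9, 1, 2, 6, 5, 0, 3, 12] (by decide) (by decide),
    mkP ![13, 3, 5, 0, 9, 7, 12, 1, 6, 2, 11, 14, 4, 10, 8] ![3, 7, 9, 1, 12, 2, 8, 5, 14, 4, 13, 10, 6, 0, 11] (by decide) (by decide),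
    mkP ![10, 2, 3, 11, 6, 14, 8, 12, 5, 0, 4, 13, 1, 9, 7] ![9, 12, 1, 2, 10, 8, 4, 14, 6, 13, 0, 3, 7, 11, 5] (by decide) (by decide),
    mkP ![11, 9, 14, 1, 10, 4, 2, 3, 0, 8, 6, 5, 13, 7, 12] ![8, 3, 6, 7, 5, 11, 10, 13, 9, 1, 4, 0, 14, 12, 2] (by decide) (by decide),
    mkP ![5, 10, 4, 6, 0, 8, 9, 14, 7, 12, 13, 3, 2, 11, 1] ![4, 14, 12, 11, 2, 0, 3, 8, 5, 6, 1, 13, 9, 10, 7] (by decide) (by decide),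
    mkP ![8, 12, 13, 14, 7, 6, 0, 2, 11, 3, 1, 10, 9, 5, 4] ![6, 10, 7, 9, 14, 13, 5, 4, 0, 12, 11, 8, 1, 2, 3] (by decide) (by decide),
    mkP ![1, 11, 12, 10, 14, 2, 7, 5, 13, 6, 0, 4, 8, 3, 9] ![10, 0, 5, 13, 11, 7, 9, 6, 12, 14, 3, 1, 2, 8, 4] (by decide) (by decide),
    mkP ![7, 13, 1, 5, 3, 10, 14, 4, 2, 11, 9, 8, 6, 12, 0] ![14, 2, 8, 4, 7, 3, 12, 0, 11, 10, 5, 9, 13, 1, 6] (by decide) (by decide),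
    mkP ![9, 5, 8, 4, 12, 0, 1, 6, 14, 13, 3, 7, 11, 2, 10] ![5, 6, 13, 10, 3, 1, 7, 11, 2, 0, 14, 12, 4, 9, 8] (by decide) (by decide)]

private lemma hwp2 : HWPStarSolution 15 3 15 2 12 := by
  have h3 : ∀ i : Fin 14, (i : ℕ) < 2 → ∀ x : Fin 15,
      (⇑(sol2 i))^[3] x = x ∧ sol2 i x ≠ x := by decide
  have h15 : ∀ i : Fin 14, 2 ≤ (i : ℕ) → ∀ x : Fin 15,
      (⇑(sol2 i))^[15] x = x ∧ sol2 i x ≠ x ∧ (⇑(sol2 i))^[3] x ≠ x ∧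
        (⇑(sol2 i))^[5] x ≠ x := by decide
  have hu : ∀ x y : Fin 15, x ≠ y → ∃ i : Fin 14, sol2 i x = y ∧ ∀ j : Fin 14, sol2 j x = y → j = i := by decide
  exact ⟨sol2, fun i hi x => per3 _ x (h3 i hi x).1 (h3 i hi x).2,
    fun i hi x => per15 _ x (h15 i hi x).1 (h15 i hi x).2.1 (h15 i hi x).2.2.1
      (h15 i hi x).2.2.2, fun x y hxy => hu x y hxy⟩

private def sol3 : Fin 14 → Equiv.Perm (Fin 15) :=
  ![mkP ![2, 4, 11, 9, 8, 13, 5, 10, 1, 14, 12, 0, 7, 6, 3] ![11, 8, 0, 14, 1, 6, 13, 12, 4, 3, 7, 2, 10, 5, 9] (by decide) (by decide),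
    mkP ![3, 14, 6, 12, 13, 1, 11, 9, 4, 10, 7, 2, 0, 8, 5] ![12, 5, 11, 0, 8, 14, 2, 10, 13, 7, 9, 6, 3, 4, 1] (by decide) (by decide),
    mkP ![9, 7, 4, 0, 6, 8, 2, 14, 10, 3, 5, 13, 11, 12, 1] ![3, 14, 6, 9, 2, 10, 4, 1, 5, 0, 8, 12, 13, 11, 7] (by decide) (by decide),
    mkP ![6, 10, 13, 4, 5, 12, 9, 0, 7, 2, 14, 3, 1, 11, 8] ![7, 12, 9, 11, 3, 4, 0, 8, 14, 6, 1, 13, 5, 2, 10] (by decide) (by decide),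
    mkP ![4, 3, 12, 11, 14, 10, 13, 1, 0, 7, 6, 5, 8, 2, 9] ![8, 7, 13, 1, 0, 11, 10, 9, 12, 14, 5, 3, 2, 6, 4] (by decide) (by decide),
    mkP ![13, 8, 5, 2, 11, 9, 0, 6, 12, 4, 1, 10, 14, 3, 7] ![6, 10, 3, 13, 9, 2, 7, 14, 1, 5, 11, 4, 8, 0, 12] (by decide) (by decide),
    mkP ![14, 0, 8, 1, 12, 7, 3, 2, 13, 5, 4, 9, 6, 10, 11] ![1, 3, 7, 6, 10, 9, 12, 5, 2, 11, 13, 14, 4, 8, 0] (by decide) (by decide),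
    mkP ![10, 9, 3, 7, 1, 11, 14, 13, 2, 12, 8, 6, 5, 4, 0] ![14, 4, 8, 2, 13, 12, 11, 3, 10, 1, 0, 5, 9, 7, 6] (by decide) (by decide),
    mkP ![7, 6, 1, 13, 10, 0, 12, 3, 5, 11, 2, 8, 9, 14, 4] ![5, 2, 10, 7, 14, 8, 1, 0, 11, 12, 4, 9, 6, 3, 13] (by decide) (by decide),
    mkP ![8, 5, 7, 10, 3, 14, 1, 11, 6, 13, 9, 12, 4, 0, 2] ![13, 6, 14, 4, 12, 1, 8, 2, 0, 10, 3, 7, 11, 9, 5] (by decide) (by decide),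
    mkP ![12, 11, 9, 14, 0, 4, 8, 5, 3, 6, 13, 7, 2, 1, 10] ![4, 13, 12, 8, 5, 7, 9, 11, 6, 2, 14, 1, 0, 10, 3] (by decide) (by decide),
    mkP ![1, 12, 14, 6, 2, 3, 7, 8, 9, 0, 11, 4, 10, 5, 13] ![9, 0, 4, 5, 11, 13, 3, 6, 7, 8, 12, 10, 1, 14, 2] (by decide) (by decide),
    mkP ![11, 13, 10, 5, 7, 2, 4, 12, 14, 8, 0, 1, 3, 9, 6] ![10, 11, 5, 12, 6, 3, 14, 4, 9, 13, 2, 0, 7, 1, 8] (by decide) (by decide),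
    mkP ![5, 2, 0, 8, 9, 6, 10, 4, 11, 1, 3, 14, 13, 7, 12] ![2, 9, 1, 10, 7, 0, 5, 13, 3, 4, 6, 8, 14, 12, 11] (by decide) (by decide)]

private lemma hwp3 : HWPStarSolution 15 3 15 3 11 := by
  have h3 : ∀ i : Fin 14, (i : ℕ) < 3 → ∀ x : Fin 15,
      (⇑(sol3 i))^[3] x = x ∧ sol3 i x ≠ x := by decide
  have h15 : ∀ i : Fin 14, 3 ≤ (i : ℕ) → ∀ x : Fin 15,
      (⇑(sol3 i))^[15] x = x ∧ sol3 i x ≠ x ∧ (⇑(sol3 i))^[3] x ≠ x ∧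
        (⇑(sol3 i))^[5] x ≠ x := by decide
  have hu : ∀ x y : Fin 15, x ≠ y → ∃ i : Fin 14, sol3 i x = y ∧ ∀ j : Fin 14, sol3 j x = y → j = i := by decide
  exact ⟨sol3, fun i hi x => per3 _ x (h3 i hi x).1 (h3 i hi x).2,
    fun i hi x => per15 _ x (h15 i hi x).1 (h15 i hi x).2.1 (h15 i hi x).2.2.1
      (h15 i hi x).2.2.2, fun x y hxy => hu x y hxy⟩

private def sol4 : Fin 14 → Equiv.Perm (Fin 15) :=
  ![mkP ![2, 4, 11, 9, 8, 13, 5, 10, 1, 14, 12, 0, 7, 6, 3] ![11, 8, 0, 14, 1, 6, 13, 12, 4, 3, 7, 2, 10, 5, 9] (by decide) (by decide),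
    mkP ![3, 14, 6, 12, 13, 1, 11, 9, 4, 10, 7, 2, 0, 8, 5] ![12, 5, 11, 0, 8, 14, 2, 10, 13, 7, 9, 6, 3, 4, 1] (by decide) (by decide),
    mkP ![9, 7, 4, 0, 6, 8, 2, 14, 10, 3, 5, 13, 11, 12, 1] ![3, 14, 6, 9, 2, 10, 4, 1, 5, 0, 8, 12, 13, 11, 7] (by decide) (by decide),
    mkP ![7, 6, 8, 11, 10, 0, 13, 5, 9, 2, 14, 12, 3, 1, 4] ![5, 13, 9, 12, 14, 7, 1, 0, 2, 8, 4, 3, 11, 6, 10] (by decide) (by decide),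
    mkP ![10, 13, 12, 4, 5, 11, 7, 8, 3, 6, 2, 1, 9, 14, 0] ![14, 11, 10, 8, 3, 4, 9, 6, 7, 12, 0, 5, 2, 1, 13] (by decide) (by decide),
    mkP ![1, 2, 5, 7, 12, 3, 0, 11, 6, 13, 8, 4, 14, 10, 9] ![6, 0, 1, 5, 11, 2, 8, 3, 10, 14, 13, 7, 4, 9, 12] (by decide) (by decide),
    mkP ![5, 9, 13, 8, 7, 4, 3, 2, 14, 0, 6, 10, 1, 11, 12] ![9, 12, 7, 6, 5, 0, 10, 4, 3, 1, 11, 13, 14, 2, 8] (by decide) (by decide),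
    mkP ![6, 0, 7, 10, 14, 12, 4, 3, 11, 1, 13, 9, 8, 5, 2] ![1, 9, 14, 7, 6, 13, 0, 2, 12, 11, 3, 8, 5, 10, 4] (by decide) (by decide),
    mkP ![13, 3, 14, 6, 2, 10, 12, 1, 0, 4, 11, 8, 5, 9, 7] ![8, 7, 4, 1, 9, 12, 3, 14, 11, 13, 5, 10, 6, 0, 2] (by decide) (by decide),
    mkP ![14, 8, 9, 13, 11, 2, 1, 4, 7, 12, 3, 5, 10, 0, 6] ![13, 6, 5, 10, 7, 11, 14, 8, 1, 2, 12, 4, 9, 3, 0] (by decide) (by decide),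
    mkP ![4, 12, 10, 2, 3, 9, 8, 0, 5, 11, 1, 14, 6, 7, 13] ![7, 10, 3, 4, 0, 8, 12, 13, 6, 5, 2, 9, 1, 14, 11] (by decide) (by decide),
    mkP ![11, 10, 1, 5, 9, 6, 14, 12, 13, 7, 0, 3, 2, 4, 8] ![10, 2, 12, 11, 13, 3, 5, 9, 14, 4, 1, 0, 7, 8, 6] (by decide) (by decide),
    mkP ![12, 5, 0, 14, 1, 7, 10, 13, 2, 8, 9, 6, 4, 3, 11] ![2, 4, 8, 13, 12, 1, 11, 5, 9, 10, 6, 14, 0, 7, 3] (by decide) (by decide),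
    mkP ![8, 11, 3, 1, 0, 14, 9, 6, 12, 5, 4, 7, 13, 2, 10] ![4, 3, 13, 2, 10, 9, 7, 11, 0, 6, 14, 1, 8, 12, 5] (by decide) (by decide)]

private lemma hwp4 : HWPStarSolution 15 3 15 4 10 := by
  have h3 : ∀ i : Fin 14, (i : ℕ) < 4 → ∀ x : Fin 15,
      (⇑(sol4 i))^[3] x = x ∧ sol4 i x ≠ x := by decide
  have h15 : ∀ i : Fin 14, 4 ≤ (i : ℕ) → ∀ x : Fin 15,
      (⇑(sol4 i))^[15] x = x ∧ sol4 i x ≠ x ∧ (⇑(sol4 i))^[3] x ≠ x ∧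
        (⇑(sol4 i))^[5] x ≠ x := by decide
  have hu : ∀ x y : Fin 15, x ≠ y → ∃ i : Fin 14, sol4 i x = y ∧ ∀ j : Fin 14, sol4 j x = y → j = i := by decide
  exact ⟨sol4, fun i hi x => per3 _ x (h3 i hi x).1 (h3 i hi x).2,
    fun i hi x => per15 _ x (h15 i hi x).1 (h15 i hi x).2.1 (h15 i hi x).2.2.1
      (h15 i hi x).2.2.2, fun x y hxy => hu x y hxy⟩

private def sol5 : Fin 14 → Equiv.Perm (Fin 15) :=
  ![mkP ![2, 4, 11, 9, 8, 13, 5, 10, 1, 14, 12, 0, 7, 6, 3] ![11, 8, 0, 14, 1, 6, 13, 12, 4, 3, 7, 2, 10, 5, 9] (by decide) (by decide),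
    mkP ![3, 14, 6, 12, 13, 1, 11, 9, 4, 10, 7, 2, 0, 8, 5] ![12, 5, 11, 0, 8, 14, 2, 10, 13, 7, 9, 6, 3, 4, 1] (by decide) (by decide),
    mkP ![9, 7, 4, 0, 6, 8, 2, 14, 10, 3, 5, 13, 11, 12, 1] ![3, 14, 6, 9, 2, 10, 4, 1, 5, 0, 8, 12, 13, 11, 7] (by decide) (by decide),
    mkP ![7, 6, 8, 11, 10, 0, 13, 5, 9, 2, 14, 12, 3, 1, 4] ![5, 13, 9, 12, 14, 7, 1, 0, 2, 8, 4, 3, 11, 6, 10] (by decide) (by decide),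
    mkP ![5, 3, 12, 6, 11, 7, 1, 0, 13, 4, 8, 9, 14, 10, 2] ![7, 6, 14, 1, 9, 0, 3, 5, 10, 11, 13, 4, 2, 8, 12] (by decide) (by decide),
    mkP ![12, 8, 13, 10, 14, 11, 4, 1, 3, 0, 2, 6, 5, 9, 7] ![9, 7, 10, 8, 6, 12, 11, 14, 1, 13, 3, 5, 0, 2, 4] (by decide) (by decide),
    mkP ![1, 5, 0, 7, 9, 10, 12, 2, 14, 8, 6, 3, 13, 4, 11] ![2, 0, 7, 11, 13, 1, 10, 3, 9, 4, 5, 14, 6, 12, 8] (by decide) (by decide),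
    mkP ![8, 13, 10, 2, 12, 4, 0, 3, 11, 7, 1, 14, 6, 5, 9] ![6, 10, 3, 7, 5, 13, 12, 9, 0, 14, 2, 8, 4, 1, 11] (by decide) (by decide),
    mkP ![6, 0, 7, 4, 1, 3, 14, 11, 5, 13, 9, 8, 10, 2, 12] ![1, 4, 13, 5, 3, 8, 0, 2, 11, 10, 12, 7, 14, 9, 6] (by decide) (by decide),
    mkP ![4, 10, 14, 8, 3, 12, 9, 6, 7, 5, 0, 1, 2, 11, 13] ![10, 11, 12, 4, 0, 9, 7, 8, 3, 6, 1, 13, 5, 14, 2] (by decide) (by decide),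
    mkP ![13, 12, 1, 5, 2, 14, 8, 4, 0, 6, 11, 7, 9, 3, 10] ![8, 2, 4, 13, 7, 3, 9, 11, 6, 12, 14, 10, 1, 0, 5] (by decide) (by decide),
    mkP ![11, 9, 3, 1, 7, 2, 10, 8, 6, 12, 13, 5, 4, 14, 0] ![14, 3, 5, 2, 12, 11, 8, 4, 7, 1, 6, 0, 9, 10, 13] (by decide) (by decide),
    mkP ![10, 2, 9, 14, 5, 6, 7, 13, 12, 11, 3, 4, 1, 0, 8] ![13, 12, 1, 10, 11, 4, 5, 6, 14, 2, 0, 9, 8, 7, 3] (by decide) (by decide),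
    mkP ![14, 11, 5, 13, 0, 9, 3, 12, 2, 1, 4, 10, 8, 7, 6] ![4, 9, 8, 6, 10, 2, 14, 13, 12, 5, 11, 1, 7, 3, 0] (by decide) (by decide)]

private lemma hwp5 : HWPStarSolution 15 3 15 5 9 := by
  have h3 : ∀ i : Fin 14, (i : ℕ) < 5 → ∀ x : Fin 15,
      (⇑(sol5 i))^[3] x = x ∧ sol5 i x ≠ x := by decide
  have h15 : ∀ i : Fin 14, 5 ≤ (i : ℕ) → ∀ x : Fin 15,
      (⇑(sol5 i))^[15] x = x ∧ sol5 i x ≠ x ∧ (⇑(sol5 i))^[3] x ≠ x ∧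
        (⇑(sol5 i))^[5] x ≠ x := by decide
  have hu : ∀ x y : Fin 15, x ≠ y → ∃ i : Fin 14, sol5 i x = y ∧ ∀ j : Fin 14, sol5 j x = y → j = i := by decide
  exact ⟨sol5, fun i hi x => per3 _ x (h3 i hi x).1 (h3 i hi x).2,
    fun i hi x => per15 _ x (h15 i hi x).1 (h15 i hi x).2.1 (h15 i hi x).2.2.1
      (h15 i hi x).2.2.2, fun x y hxy => hu x y hxy⟩

private def sol6 : Fin 14 → Equiv.Perm (Fin 15) :=
  ![mkP ![2, 4, 11, 9, 8, 13, 5, 10, 1, 14, 12, 0, 7, 6, 3] ![11, 8, 0, 14, 1, 6, 13, 12, 4, 3, 7, 2, 10, 5, 9] (by decide) (by decide),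
    mkP ![3, 14, 6, 12, 13, 1, 11, 9, 4, 10, 7, 2, 0, 8, 5] ![12, 5, 11, 0, 8, 14, 2, 10, 13, 7, 9, 6, 3, 4, 1] (by decide) (by decide),
    mkP ![9, 7, 4, 0, 6, 8, 2, 14, 10, 3, 5, 13, 11, 12, 1] ![3, 14, 6, 9, 2, 10, 4, 1, 5, 0, 8, 12, 13, 11, 7] (by decide) (by decide),
    mkP ![7, 6, 8, 11, 10, 0, 13, 5, 9, 2, 14, 12, 3, 1, 4] ![5, 13, 9, 12, 14, 7, 1, 0, 2, 8, 4, 3, 11, 6, 10] (by decide) (by decide),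
    mkP ![5, 3, 12, 6, 11, 7, 1, 0, 13, 4, 8, 9, 14, 10, 2] ![7, 6, 14, 1, 9, 0, 3, 5, 10, 11, 13, 4, 2, 8, 12] (by decide) (by decide),
    mkP ![13, 8, 3, 7, 14, 6, 12, 2, 11, 0, 4, 1, 5, 9, 10] ![9, 11, 7, 2, 10, 12, 5, 3, 1, 13, 14, 8, 6, 0, 4] (by decide) (by decide),
    mkP ![1, 2, 7, 14, 12, 4, 10, 13, 0, 6, 3, 8, 9, 5, 11] ![8, 0, 1, 10, 5, 13, 9, 2, 11, 12, 6, 14, 4, 7, 3] (by decide) (by decide),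
    mkP ![11, 12, 10, 5, 2, 14, 0, 8, 3, 1, 13, 4, 6, 7, 9] ![6, 9, 4, 8, 11, 3, 12, 13, 7, 14, 2, 0, 1, 10, 5] (by decide) (by decide),
    mkP ![10, 11, 9, 4, 5, 2, 14, 6, 7, 12, 1, 3, 8, 0, 13] ![13, 10, 5, 11, 3, 4, 7, 8, 12, 2, 0, 1, 9, 14, 6] (by decide) (by decide),
    mkP ![6, 10, 13, 1, 0, 12, 9, 3, 5, 7, 2, 14, 4, 11, 8] ![4, 3, 10, 7, 12, 8, 0, 9, 14, 6, 1, 13, 5, 2, 11] (by decide) (by decide),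
    mkP ![12, 13, 5, 10, 9, 3, 7, 1, 14, 8, 11, 6, 2, 4, 0] ![14, 7, 12, 5, 13, 2, 11, 6, 9, 4, 3, 10, 0, 1, 8] (by decide) (by decide),
    mkP ![8, 0, 14, 2, 7, 10, 4, 11, 6, 13, 9, 5, 1, 3, 12] ![1, 12, 3, 13, 6, 11, 8, 4, 0, 10, 5, 7, 14, 9, 2] (by decide) (by decide),
    mkP ![4, 5, 1, 13, 3, 9, 8, 12, 2, 11, 0, 7, 10, 14, 6] ![10, 2, 8, 4, 0, 1, 14, 11, 6, 5, 12, 9, 7, 3, 13] (by decide) (by decide),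
    mkP ![14, 9, 0, 8, 1, 11, 3, 4, 12, 5, 6, 10, 13, 2, 7] ![2, 4, 13, 6, 7, 9, 10, 14, 3, 1, 11, 5, 8, 12, 0] (by decide) (by decide)]

private lemma hwp6 : HWPStarSolution 15 3 15 6 8 := by
  have h3 : ∀ i : Fin 14, (i : ℕ) < 6 → ∀ x : Fin 15,
      (⇑(sol6 i))^[3] x = x ∧ sol6 i x ≠ x := by decide
  have h15 : ∀ i : Fin 14, 6 ≤ (i : ℕ) → ∀ x : Fin 15,
      (⇑(sol6 i))^[15] x = x ∧ sol6 i x ≠ x ∧ (⇑(sol6 i))^[3] x ≠ x ∧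
        (⇑(sol6 i))^[5] x ≠ x := by decide
  have hu : ∀ x y : Fin 15, x ≠ y → ∃ i : Fin 14, sol6 i x = y ∧ ∀ j : Fin 14, sol6 j x = y → j = i := by decide
  exact ⟨sol6, fun i hi x => per3 _ x (h3 i hi x).1 (h3 i hi x).2,
    fun i hi x => per15 _ x (h15 i hi x).1 (h15 i hi x).2.1 (h15 i hi x).2.2.1
      (h15 i hi x).2.2.2, fun x y hxy => hu x y hxy⟩

private def sol7 : Fin 14 → Equiv.Perm (Fin 15) :=
  ![mkP ![2, 4, 11, 9, 8, 13, 5, 10, 1, 14, 12, 0, 7, 6, 3] ![11, 8, 0, 14, 1, 6, 13, 12, 4, 3, 7, 2, 10, 5, 9] (by decide) (by decide),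
    mkP ![3, 14, 6, 12, 13, 1, 11, 9, 4, 10, 7, 2, 0, 8, 5] ![12, 5, 11, 0, 8, 14, 2, 10, 13, 7, 9, 6, 3, 4, 1] (by decide) (by decide),
    mkP ![9, 7, 4, 0, 6, 8, 2, 14, 10, 3, 5, 13, 11, 12, 1] ![3, 14, 6, 9, 2, 10, 4, 1, 5, 0, 8, 12, 13, 11, 7] (by decide) (by decide),
    mkP ![7, 6, 8, 11, 10, 0, 13, 5, 9, 2, 14, 12, 3, 1, 4] ![5, 13, 9, 12, 14, 7, 1, 0, 2, 8, 4, 3, 11, 6, 10] (by decide) (by decide),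
    mkP ![5, 3, 12, 6, 11, 7, 1, 0, 13, 4, 8, 9, 14, 10, 2] ![7, 6, 14, 1, 9, 0, 3, 5, 10, 11, 13, 4, 2, 8, 12] (by decide) (by decide),
    mkP ![13, 8, 3, 7, 14, 6, 12, 2, 11, 0, 4, 1, 5, 9, 10] ![9, 11, 7, 2, 10, 12, 5, 3, 1, 13, 14, 8, 6, 0, 4] (by decide) (by decide),
    mkP ![1, 13, 10, 2, 7, 9, 4, 6, 14, 11, 3, 5, 8, 0, 12] ![13, 0, 3, 10, 6, 11, 7, 4, 12, 5, 2, 9, 14, 1, 8] (by decide) (by decide),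
    mkP ![14, 12, 5, 10, 2, 3, 0, 13, 7, 1, 9, 4, 6, 11, 8] ![6, 9, 4, 5, 11, 2, 12, 8, 14, 10, 3, 13, 1, 7, 0] (by decide) (by decide),
    mkP ![12, 9, 7, 8, 3, 11, 10, 1, 6, 5, 0, 14, 2, 4, 13] ![10, 7, 12, 4, 13, 9, 8, 2, 3, 1, 6, 5, 0, 14, 11] (by decide) (by decide),
    mkP ![11, 5, 1, 4, 0, 12, 14, 3, 2, 8, 13, 6, 10, 7, 9] ![4, 2, 8, 7, 3, 1, 11, 13, 9, 14, 12, 0, 5, 10, 6] (by decide) (by decide),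
    mkP ![10, 11, 9, 14, 1, 2, 7, 12, 5, 13, 6, 8, 4, 3, 0] ![14, 4, 5, 13, 12, 8, 10, 6, 11, 2, 0, 1, 7, 9, 3] (by decide) (by decide),
    mkP ![8, 0, 14, 1, 5, 10, 9, 4, 12, 7, 11, 3, 13, 2, 6] ![1, 3, 13, 11, 7, 4, 14, 9, 0, 6, 5, 10, 8, 12, 2] (by decide) (by decide),
    mkP ![4, 2, 0, 13, 12, 14, 8, 11, 3, 6, 1, 10, 9, 5, 7] ![2, 10, 1, 8, 0, 13, 9, 14, 6, 12, 11, 7, 4, 3, 5] (by decide) (by decide),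
    mkP ![6, 10, 13, 5, 9, 4, 3, 8, 0, 12, 2, 7, 1, 14, 11] ![8, 12, 10, 6, 5, 3, 0, 11, 7, 4, 1, 14, 9, 2, 13] (by decide) (by decide)]

private lemma hwp7 : HWPStarSolution 15 3 15 7 7 := by
  have h3 : ∀ i : Fin 14, (i : ℕ) < 7 → ∀ x : Fin 15,
      (⇑(sol7 i))^[3] x = x ∧ sol7 i x ≠ x := by decide
  have h15 : ∀ i : Fin 14, 7 ≤ (i : ℕ) → ∀ x : Fin 15,
      (⇑(sol7 i))^[15] x = x ∧ sol7 i x ≠ x ∧ (⇑(sol7 i))^[3] x ≠ x ∧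
        (⇑(sol7 i))^[5] x ≠ x := by decide
  have hu : ∀ x y : Fin 15, x ≠ y → ∃ i : Fin 14, sol7 i x = y ∧ ∀ j : Fin 14, sol7 j x = y → j = i := by decide
  exact ⟨sol7, fun i hi x => per3 _ x (h3 i hi x).1 (h3 i hi x).2,
    fun i hi x => per15 _ x (h15 i hi x).1 (h15 i hi x).2.1 (h15 i hi x).2.2.1
      (h15 i hi x).2.2.2, fun x y hxy => hu x y hxy⟩

private def sol8 : Fin 14 → Equiv.Perm (Fin 15) :=
  ![mkP ![2, 4, 11, 9, 8, 13, 5, 10, 1, 14, 12, 0, 7, 6, 3] ![11, 8, 0, 14, 1, 6, 13, 12, 4, 3, 7, 2, 10, 5, 9] (by decide) (by decide),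
    mkP ![3, 14, 6, 12, 13, 1, 11, 9, 4, 10, 7, 2, 0, 8, 5] ![12, 5, 11, 0, 8, 14, 2, 10, 13, 7, 9, 6, 3, 4, 1] (by decide) (by decide),
    mkP ![9, 7, 4, 0, 6, 8, 2, 14, 10, 3, 5, 13, 11, 12, 1] ![3, 14, 6, 9, 2, 10, 4, 1, 5, 0, 8, 12, 13, 11, 7] (by decide) (by decide),
    mkP ![7, 6, 8, 11, 10, 0, 13, 5, 9, 2, 14, 12, 3, 1, 4] ![5, 13, 9, 12, 14, 7, 1, 0, 2, 8, 4, 3, 11, 6, 10] (by decide) (by decide),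
    mkP ![5, 3, 12, 6, 11, 7, 1, 0, 13, 4, 8, 9, 14, 10, 2] ![7, 6, 14, 1, 9, 0, 3, 5, 10, 11, 13, 4, 2, 8, 12] (by decide) (by decide),
    mkP ![13, 8, 3, 7, 14, 6, 12, 2, 11, 0, 4, 1, 5, 9, 10] ![9, 11, 7, 2, 10, 12, 5, 3, 1, 13, 14, 8, 6, 0, 4] (by decide) (by decide),
    mkP ![1, 13, 10, 2, 7, 9, 4, 6, 14, 11, 3, 5, 8, 0, 12] ![13, 0, 3, 10, 6, 11, 7, 4, 12, 5, 2, 9, 14, 1, 8] (by decide) (by decide),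
    mkP ![4, 0, 7, 10, 1, 12, 14, 13, 6, 5, 11, 3, 9, 2, 8] ![1, 4, 13, 11, 0, 9, 8, 2, 14, 12, 3, 10, 5, 7, 6] (by decide) (by decide),
    mkP ![12, 11, 1, 8, 5, 10, 3, 4, 2, 6, 0, 7, 13, 14, 9] ![10, 2, 8, 6, 7, 4, 9, 11, 3, 14, 5, 1, 0, 12, 13] (by decide) (by decide),
    mkP ![10, 2, 5, 14, 0, 4, 7, 1, 12, 13, 9, 8, 6, 3, 11] ![4, 7, 1, 13, 5, 2, 12, 6, 11, 10, 0, 14, 8, 9, 3] (by decide) (by decide),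
    mkP ![6, 5, 9, 1, 3, 11, 10, 12, 0, 8, 13, 14, 2, 4, 7] ![8, 3, 12, 4, 13, 1, 0, 14, 9, 2, 6, 5, 7, 10, 11] (by decide) (by decide),
    mkP ![8, 9, 14, 13, 2, 3, 0, 11, 5, 12, 1, 10, 4, 7, 6] ![6, 10, 4, 5, 12, 8, 14, 13, 0, 1, 11, 7, 9, 3, 2] (by decide) (by decide),
    mkP ![11, 10, 13, 4, 12, 14, 9, 8, 3, 7, 2, 6, 1, 5, 0] ![14, 12, 10, 8, 3, 13, 11, 9, 7, 6, 1, 0, 4, 2, 5] (by decide) (by decide),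
    mkP ![14, 12, 0, 5, 9, 2, 8, 3, 7, 1, 6, 4, 10, 11, 13] ![2, 9, 5, 7, 11, 3, 10, 8, 6, 4, 12, 13, 1, 14, 0] (by decide) (by decide)]

private lemma hwp8 : HWPStarSolution 15 3 15 8 6 := by
  have h3 : ∀ i : Fin 14, (i : ℕ) < 8 → ∀ x : Fin 15,
      (⇑(sol8 i))^[3] x = x ∧ sol8 i x ≠ x := by decide
  have h15 : ∀ i : Fin 14, 8 ≤ (i : ℕ) → ∀ x : Fin 15,
      (⇑(sol8 i))^[15] x = x ∧ sol8 i x ≠ x ∧ (⇑(sol8 i))^[3] x ≠ x ∧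
        (⇑(sol8 i))^[5] x ≠ x := by decide
  have hu : ∀ x y : Fin 15, x ≠ y → ∃ i : Fin 14, sol8 i x = y ∧ ∀ j : Fin 14, sol8 j x = y → j = i := by decide
  exact ⟨sol8, fun i hi x => per3 _ x (h3 i hi x).1 (h3 i hi x).2,
    fun i hi x => per15 _ x (h15 i hi x).1 (h15 i hi x).2.1 (h15 i hi x).2.2.1
      (h15 i hi x).2.2.2, fun x y hxy => hu x y hxy⟩

private def sol9 : Fin 14 → Equiv.Perm (Fin 15) :=
  ![mkP ![2, 4, 11, 9, 8, 13, 5, 10, 1, 14, 12, 0, 7, 6, 3] ![11, 8, 0, 14, 1, 6, 13, 12, 4, 3, 7, 2, 10, 5, 9] (by decide) (by decide),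
    mkP ![3, 14, 6, 12, 13, 1, 11, 9, 4, 10, 7, 2, 0, 8, 5] ![12, 5, 11, 0, 8, 14, 2, 10, 13, 7, 9, 6, 3, 4, 1] (by decide) (by decide),
    mkP ![9, 7, 4, 0, 6, 8, 2, 14, 10, 3, 5, 13, 11, 12, 1] ![3, 14, 6, 9, 2, 10, 4, 1, 5, 0, 8, 12, 13, 11, 7] (by decide) (by decide),
    mkP ![7, 6, 8, 11, 10, 0, 13, 5, 9, 2, 14, 12, 3, 1, 4] ![5, 13, 9, 12, 14, 7, 1, 0, 2, 8, 4, 3, 11, 6, 10] (by decide) (by decide),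
    mkP ![5, 3, 12, 6, 11, 7, 1, 0, 13, 4, 8, 9, 14, 10, 2] ![7, 6, 14, 1, 9, 0, 3, 5, 10, 11, 13, 4, 2, 8, 12] (by decide) (by decide),
    mkP ![13, 8, 3, 7, 14, 6, 12, 2, 11, 0, 4, 1, 5, 9, 10] ![9, 11, 7, 2, 10, 12, 5, 3, 1, 13, 14, 8, 6, 0, 4] (by decide) (by decide),
    mkP ![1, 13, 10, 2, 7, 9, 4, 6, 14, 11, 3, 5, 8, 0, 12] ![13, 0, 3, 10, 6, 11, 7, 4, 12, 5, 2, 9, 14, 1, 8] (by decide) (by decide),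
    mkP ![4, 0, 7, 10, 1, 12, 14, 13, 6, 5, 11, 3, 9, 2, 8] ![1, 4, 13, 11, 0, 9, 8, 2, 14, 12, 3, 10, 5, 7, 6] (by decide) (by decide),
    mkP ![12, 10, 13, 14, 0, 2, 3, 11, 7, 1, 9, 8, 4, 5, 6] ![4, 9, 5, 6, 12, 13, 14, 8, 11, 10, 1, 7, 0, 2, 3] (by decide) (by decide),
    mkP ![10, 12, 1, 13, 9, 4, 8, 3, 5, 7, 2, 14, 6, 11, 0] ![14, 2, 10, 7, 5, 8, 12, 9, 6, 4, 0, 13, 1, 3, 11] (by decide) (by decide),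
    mkP ![11, 9, 0, 5, 12, 14, 7, 8, 3, 6, 1, 10, 2, 4, 13] ![2, 10, 12, 8, 13, 3, 9, 6, 7, 1, 11, 0, 4, 14, 5] (by decide) (by decide),
    mkP ![8, 11, 14, 1, 5, 10, 0, 4, 2, 12, 6, 7, 13, 3, 9] ![6, 3, 8, 13, 7, 4, 10, 11, 0, 14, 5, 1, 9, 12, 2] (by decide) (by decide),
    mkP ![6, 2, 5, 8, 3, 11, 9, 1, 12, 13, 0, 4, 10, 14, 7] ![10, 7, 1, 4, 11, 2, 0, 14, 3, 6, 12, 5, 8, 9, 13] (by decide) (by decide),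
    mkP ![14, 5, 9, 4, 2, 3, 10, 12, 0, 8, 13, 6, 1, 7, 11] ![8, 12, 4, 5, 3, 1, 11, 13, 9, 2, 6, 14, 7, 10, 0] (by decide) (by decide)]

private lemma hwp9 : HWPStarSolution 15 3 15 9 5 := by
  have h3 : ∀ i : Fin 14, (i : ℕ) < 9 → ∀ x : Fin 15,
      (⇑(sol9 i))^[3] x = x ∧ sol9 i x ≠ x := by decide
  have h15 : ∀ i : Fin 14, 9 ≤ (i : ℕ) → ∀ x : Fin 15,
      (⇑(sol9 i))^[15] x = x ∧ sol9 i x ≠ x ∧ (⇑(sol9 i))^[3] x ≠ x ∧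
        (⇑(sol9 i))^[5] x ≠ x := by decide
  have hu : ∀ x y : Fin 15, x ≠ y → ∃ i : Fin 14, sol9 i x = y ∧ ∀ j : Fin 14, sol9 j x = y → j = i := by decide
  exact ⟨sol9, fun i hi x => per3 _ x (h3 i hi x).1 (h3 i hi x).2,
    fun i hi x => per15 _ x (h15 i hi x).1 (h15 i hi x).2.1 (h15 i hi x).2.2.1
      (h15 i hi x).2.2.2, fun x y hxy => hu x y hxy⟩

private def sol10 : Fin 14 → Equiv.Perm (Fin 15) :=
  ![mkP ![2, 4, 11, 9, 8, 13, 5, 10, 1, 14, 12, 0, 7, 6, 3] ![11, 8, 0, 14, 1, 6, 13, 12, 4, 3, 7, 2, 10, 5, 9] (by decide) (by decide),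
    mkP ![3, 14, 6, 12, 13, 1, 11, 9, 4, 10, 7, 2, 0, 8, 5] ![12, 5, 11, 0, 8, 14, 2, 10, 13, 7, 9, 6, 3, 4, 1] (by decide) (by decide),
    mkP ![9, 7, 4, 0, 6, 8, 2, 14, 10, 3, 5, 13, 11, 12, 1] ![3, 14, 6, 9, 2, 10, 4, 1, 5, 0, 8, 12, 13, 11, 7] (by decide) (by decide),
    mkP ![7, 6, 8, 11, 10, 0, 13, 5, 9, 2, 14, 12, 3, 1, 4] ![5, 13, 9, 12, 14, 7, 1, 0, 2, 8, 4, 3, 11, 6, 10] (by decide) (by decide),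
    mkP ![5, 3, 12, 6, 11, 7, 1, 0, 13, 4, 8, 9, 14, 10, 2] ![7, 6, 14, 1, 9, 0, 3, 5, 10, 11, 13, 4, 2, 8, 12] (by decide) (by decide),
    mkP ![13, 8, 3, 7, 14, 6, 12, 2, 11, 0, 4, 1, 5, 9, 10] ![9, 11, 7, 2, 10, 12, 5, 3, 1, 13, 14, 8, 6, 0, 4] (by decide) (by decide),
    mkP ![1, 13, 10, 2, 7, 9, 4, 6, 14, 11, 3, 5, 8, 0, 12] ![13, 0, 3, 10, 6, 11, 7, 4, 12, 5, 2, 9, 14, 1, 8] (by decide) (by decide),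
    mkP ![4, 0, 7, 10, 1, 12, 14, 13, 6, 5, 11, 3, 9, 2, 8] ![1, 4, 13, 11, 0, 9, 8, 2, 14, 12, 3, 10, 5, 7, 6] (by decide) (by decide),
    mkP ![12, 10, 13, 14, 0, 2, 3, 11, 7, 1, 9, 8, 4, 5, 6] ![4, 9, 5, 6, 12, 13, 14, 8, 11, 10, 1, 7, 0, 2, 3] (by decide) (by decide),
    mkP ![8, 11, 0, 4, 5, 3, 7, 12, 2, 13, 1, 10, 6, 14, 9] ![2, 10, 8, 5, 3, 4, 12, 6, 0, 14, 11, 1, 7, 9, 13] (by decide) (by decide),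
    mkP ![6, 2, 9, 1, 3, 11, 8, 4, 5, 12, 0, 14, 10, 7, 13] ![10, 3, 1, 4, 7, 8, 0, 13, 6, 2, 12, 5, 9, 14, 11] (by decide) (by decide),
    mkP ![11, 5, 14, 13, 12, 10, 9, 1, 3, 8, 6, 7, 2, 4, 0] ![14, 7, 12, 8, 13, 1, 10, 11, 9, 6, 5, 0, 4, 3, 2] (by decide) (by decide),
    mkP ![14, 12, 1, 5, 9, 4, 10, 8, 0, 7, 2, 6, 13, 3, 11] ![8, 2, 10, 13, 5, 3, 11, 9, 7, 4, 6, 14, 1, 12, 0] (by decide) (by decide),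
    mkP ![10, 9, 5, 8, 2, 14, 0, 3, 12, 6, 13, 4, 1, 11, 7] ![6, 12, 4, 7, 11, 2, 9, 14, 3, 1, 0, 13, 8, 10, 5] (by decide) (by decide)]

private lemma hwp10 : HWPStarSolution 15 3 15 10 4 := by
  have h3 : ∀ i : Fin 14, (i : ℕ) < 10 → ∀ x : Fin 15,
      (⇑(sol10 i))^[3] x = x ∧ sol10 i x ≠ x := by decide
  have h15 : ∀ i : Fin 14, 10 ≤ (i : ℕ) → ∀ x : Fin 15,
      (⇑(sol10 i))^[15] x = x ∧ sol10 i x ≠ x ∧ (⇑(sol10 i))^[3] x ≠ x ∧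
        (⇑(sol10 i))^[5] x ≠ x := by decide
  have hu : ∀ x y : Fin 15, x ≠ y → ∃ i : Fin 14, sol10 i x = y ∧ ∀ j : Fin 14, sol10 j x = y → j = i := by decide
  exact ⟨sol10, fun i hi x => per3 _ x (h3 i hi x).1 (h3 i hi x).2,
    fun i hi x => per15 _ x (h15 i hi x).1 (h15 i hi x).2.1 (h15 i hi x).2.2.1
      (h15 i hi x).2.2.2, fun x y hxy => hu x y hxy⟩

private def sol11 : Fin 14 → Equiv.Perm (Fin 15) :=
  ![mkP ![2, 4, 11, 9, 8, 13, 5, 10, 1, 14, 12, 0, 7, 6, 3] ![11, 8, 0, 14, 1, 6, 13, 12, 4, 3, 7, 2, 10, 5, 9] (by decide) (by decide),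
    mkP ![3, 14, 6, 12, 13, 1, 11, 9, 4, 10, 7, 2, 0, 8, 5] ![12, 5, 11, 0, 8, 14, 2, 10, 13, 7, 9, 6, 3, 4, 1] (by decide) (by decide),
    mkP ![9, 7, 4, 0, 6, 8, 2, 14, 10, 3, 5, 13, 11, 12, 1] ![3, 14, 6, 9, 2, 10, 4, 1, 5, 0, 8, 12, 13, 11, 7] (by decide) (by decide),
    mkP ![7, 6, 8, 11, 10, 0, 13, 5, 9, 2, 14, 12, 3, 1, 4] ![5, 13, 9, 12, 14, 7, 1, 0, 2, 8, 4, 3, 11, 6, 10] (by decide) (by decide),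
    mkP ![5, 3, 12, 6, 11, 7, 1, 0, 13, 4, 8, 9, 14, 10, 2] ![7, 6, 14, 1, 9, 0, 3, 5, 10, 11, 13, 4, 2, 8, 12] (by decide) (by decide),
    mkP ![13, 8, 3, 7, 14, 6, 12, 2, 11, 0, 4, 1, 5, 9, 10] ![9, 11, 7, 2, 10, 12, 5, 3, 1, 13, 14, 8, 6, 0, 4] (by decide) (by decide),
    mkP ![1, 13, 10, 2, 7, 9, 4, 6, 14, 11, 3, 5, 8, 0, 12] ![13, 0, 3, 10, 6, 11, 7, 4, 12, 5, 2, 9, 14, 1, 8] (by decide) (by decide),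
    mkP ![4, 0, 7, 10, 1, 12, 14, 13, 6, 5, 11, 3, 9, 2, 8] ![1, 4, 13, 11, 0, 9, 8, 2, 14, 12, 3, 10, 5, 7, 6] (by decide) (by decide),
    mkP ![12, 10, 13, 14, 0, 2, 3, 11, 7, 1, 9, 8, 4, 5, 6] ![4, 9, 5, 6, 12, 13, 14, 8, 11, 10, 1, 7, 0, 2, 3] (by decide) (by decide),
    mkP ![8, 11, 0, 5, 3, 4, 7, 12, 2, 13, 1, 10, 6, 14, 9] ![2, 10, 8, 4, 5, 3, 12, 6, 0, 14, 11, 1, 7, 9, 13] (by decide) (by decide),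
    mkP ![10, 12, 1, 8, 9, 3, 0, 4, 5, 7, 6, 14, 2, 11, 13] ![6, 2, 12, 5, 7, 8, 10, 9, 3, 4, 0, 13, 1, 14, 11] (by decide) (by decide),
    mkP ![6, 5, 14, 1, 2, 11, 9, 8, 3, 12, 13, 4, 10, 7, 0] ![14, 3, 4, 8, 11, 1, 0, 13, 7, 6, 12, 5, 9, 10, 2] (by decide) (by decide),
    mkP ![11, 9, 5, 13, 12, 14, 10, 3, 0, 8, 2, 6, 1, 4, 7] ![8, 12, 10, 7, 13, 2, 11, 14, 9, 1, 6, 0, 4, 3, 5] (by decide) (by decide),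
    mkP ![14, 2, 9, 4, 5, 10, 8, 1, 12, 6, 0, 7, 13, 3, 11] ![10, 7, 1, 13, 3, 4, 9, 11, 6, 2, 5, 14, 8, 12, 0] (by decide) (by decide)]

private lemma hwp11 : HWPStarSolution 15 3 15 11 3 := by
  have h3 : ∀ i : Fin 14, (i : ℕ) < 11 → ∀ x : Fin 15,
      (⇑(sol11 i))^[3] x = x ∧ sol11 i x ≠ x := by decide
  have h15 : ∀ i : Fin 14, 11 ≤ (i : ℕ) → ∀ x : Fin 15,
      (⇑(sol11 i))^[15] x = x ∧ sol11 i x ≠ x ∧ (⇑(sol11 i))^[3] x ≠ x ∧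
        (⇑(sol11 i))^[5] x ≠ x := by decide
  have hu : ∀ x y : Fin 15, x ≠ y → ∃ i : Fin 14, sol11 i x = y ∧ ∀ j : Fin 14, sol11 j x = y → j = i := by decide
  exact ⟨sol11, fun i hi x => per3 _ x (h3 i hi x).1 (h3 i hi x).2,
    fun i hi x => per15 _ x (h15 i hi x).1 (h15 i hi x).2.1 (h15 i hi x).2.2.1
      (h15 i hi x).2.2.2, fun x y hxy => hu x y hxy⟩

private def sol12 : Fin 14 → Equiv.Perm (Fin 15) :=
  ![mkP ![2, 4, 11, 9, 8, 13, 5, 10, 1, 14, 12, 0, 7, 6, 3] ![11, 8, 0, 14, 1, 6, 13, 12, 4, 3, 7, 2, 10, 5, 9] (by decide) (by decide),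
    mkP ![3, 14, 6, 12, 13, 1, 11, 9, 4, 10, 7, 2, 0, 8, 5] ![12, 5, 11, 0, 8, 14, 2, 10, 13, 7, 9, 6, 3, 4, 1] (by decide) (by decide),
    mkP ![9, 7, 4, 0, 6, 8, 2, 14, 10, 3, 5, 13, 11, 12, 1] ![3, 14, 6, 9, 2, 10, 4, 1, 5, 0, 8, 12, 13, 11, 7] (by decide) (by decide),
    mkP ![7, 6, 8, 11, 10, 0, 13, 5, 9, 2, 14, 12, 3, 1, 4] ![5, 13, 9, 12, 14, 7, 1, 0, 2, 8, 4, 3, 11, 6, 10] (by decide) (by decide),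
    mkP ![5, 3, 12, 6, 11, 7, 1, 0, 13, 4, 8, 9, 14, 10, 2] ![7, 6, 14, 1, 9, 0, 3, 5, 10, 11, 13, 4, 2, 8, 12] (by decide) (by decide),
    mkP ![13, 8, 3, 7, 14, 6, 12, 2, 11, 0, 4, 1, 5, 9, 10] ![9, 11, 7, 2, 10, 12, 5, 3, 1, 13, 14, 8, 6, 0, 4] (by decide) (by decide),
    mkP ![1, 13, 10, 2, 7, 9, 4, 6, 14, 11, 3, 5, 8, 0, 12] ![13, 0, 3, 10, 6, 11, 7, 4, 12, 5, 2, 9, 14, 1, 8] (by decide) (by decide),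
    mkP ![4, 0, 7, 10, 1, 14, 9, 13, 5, 12, 11, 3, 6, 2, 8] ![1, 4, 13, 11, 0, 8, 12, 2, 14, 6, 3, 10, 9, 7, 5] (by decide) (by decide),
    mkP ![10, 5, 13, 1, 2, 3, 0, 11, 12, 8, 6, 14, 9, 4, 7] ![6, 3, 4, 5, 13, 1, 10, 14, 9, 12, 0, 7, 8, 2, 11] (by decide) (by decide),
    mkP ![12, 11, 9, 14, 0, 2, 7, 8, 6, 5, 1, 10, 4, 3, 13] ![4, 10, 5, 13, 12, 9, 8, 6, 7, 2, 11, 1, 0, 14, 3] (by decide) (by decide),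
    mkP ![6, 12, 1, 8, 5, 11, 10, 3, 7, 13, 0, 4, 2, 14, 9] ![10, 2, 12, 7, 11, 4, 0, 8, 3, 14, 6, 5, 1, 9, 13] (by decide) (by decide),
    mkP ![8, 10, 0, 5, 3, 4, 14, 12, 2, 1, 9, 6, 13, 7, 11] ![2, 9, 8, 4, 5, 3, 11, 13, 0, 10, 1, 14, 7, 12, 6] (by decide) (by decide),
    mkP ![14, 2, 5, 4, 9, 12, 3, 1, 0, 7, 13, 8, 10, 11, 6] ![8, 7, 1, 6, 3, 2, 14, 9, 11, 4, 12, 13, 5, 10, 0] (by decide) (by decide),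
    mkP ![11, 9, 14, 13, 12, 10, 8, 4, 3, 6, 2, 7, 1, 5, 0] ![14, 12, 10, 8, 7, 13, 9, 11, 6, 1, 5, 0, 4, 3, 2] (by decide) (by decide)]

private lemma hwp12 : HWPStarSolution 15 3 15 12 2 := by
  have h3 : ∀ i : Fin 14, (i : ℕ) < 12 → ∀ x : Fin 15,
      (⇑(sol12 i))^[3] x = x ∧ sol12 i x ≠ x := by decide
  have h15 : ∀ i : Fin 14, 12 ≤ (i : ℕ) → ∀ x : Fin 15,
      (⇑(sol12 i))^[15] x = x ∧ sol12 i x ≠ x ∧ (⇑(sol12 i))^[3] x ≠ x ∧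
        (⇑(sol12 i))^[5] x ≠ x := by decide
  have hu : ∀ x y : Fin 15, x ≠ y → ∃ i : Fin 14, sol12 i x = y ∧ ∀ j : Fin 14, sol12 j x = y → j = i := by decide
  exact ⟨sol12, fun i hi x => per3 _ x (h3 i hi x).1 (h3 i hi x).2,
    fun i hi x => per15 _ x (h15 i hi x).1 (h15 i hi x).2.1 (h15 i hi x).2.2.1
      (h15 i hi x).2.2.2, fun x y hxy => hu x y hxy⟩

private def sol14 : Fin 14 → Equiv.Perm (Fin 15) :=
  ![mkP ![2, 4, 11, 9, 8, 13, 5, 10, 1, 14, 12, 0, 7, 6, 3] ![11, 8, 0, 14, 1, 6, 13, 12, 4, 3, 7, 2, 10, 5, 9] (by decide) (by decide),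
    mkP ![11, 8, 0, 14, 1, 6, 13, 12, 4, 3, 7, 2, 10, 5, 9] ![2, 4, 11, 9, 8, 13, 5, 10, 1, 14, 12, 0, 7, 6, 3] (by decide) (by decide),
    mkP ![3, 14, 6, 12, 13, 1, 7, 2, 9, 10, 8, 4, 0, 11, 5] ![12, 5, 7, 0, 11, 14, 2, 6, 10, 8, 9, 13, 3, 4, 1] (by decide) (by decide),
    mkP ![12, 5, 7, 0, 11, 14, 2, 6, 10, 8, 9, 13, 3, 4, 1] ![3, 14, 6, 12, 13, 1, 7, 2, 9, 10, 8, 4, 0, 11, 5] (by decide) (by decide),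
    mkP ![5, 2, 10, 8, 14, 7, 4, 0, 11, 12, 1, 3, 13, 9, 6] ![7, 10, 1, 11, 6, 0, 14, 5, 3, 13, 2, 8, 9, 12, 4] (by decide) (by decide),
    mkP ![7, 10, 1, 11, 6, 0, 14, 5, 3, 13, 2, 8, 9, 12, 4] ![5, 2, 10, 8, 14, 7, 4, 0, 11, 12, 1, 3, 13, 9, 6] (by decide) (by decide),
    mkP ![13, 0, 4, 10, 9, 3, 12, 14, 6, 2, 5, 7, 8, 1, 11] ![1, 13, 9, 5, 2, 10, 8, 11, 12, 4, 3, 14, 6, 0, 7] (by decide) (by decide),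
    mkP ![1, 13, 9, 5, 2, 10, 8, 11, 12, 4, 3, 14, 6, 0, 7] ![13, 0, 4, 10, 9, 3, 12, 14, 6, 2, 5, 7, 8, 1, 11] (by decide) (by decide),
    mkP ![8, 7, 13, 2, 5, 12, 10, 9, 14, 1, 11, 6, 4, 3, 0] ![14, 9, 3, 13, 12, 4, 11, 1, 0, 7, 6, 10, 5, 2, 8] (by decide) (by decide),
    mkP ![14, 9, 3, 13, 12, 4, 11, 1, 0, 7, 6, 10, 5, 2, 8] ![8, 7, 13, 2, 5, 12, 10, 9, 14, 1, 11, 6, 4, 3, 0] (by decide) (by decide),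
    mkP ![4, 3, 12, 6, 10, 9, 1, 13, 7, 11, 0, 5, 14, 8, 2] ![10, 6, 14, 1, 0, 11, 3, 8, 13, 5, 4, 9, 2, 7, 12] (by decide) (by decide),
    mkP ![10, 6, 14, 1, 0, 11, 3, 8, 13, 5, 4, 9, 2, 7, 12] ![4, 3, 12, 6, 10, 9, 1, 13, 7, 11, 0, 5, 14, 8, 2] (by decide) (by decide),
    mkP ![6, 11, 5, 7, 3, 8, 9, 4, 2, 0, 13, 12, 1, 14, 10] ![9, 12, 8, 4, 7, 2, 0, 3, 5, 6, 14, 1, 11, 10, 13] (by decide) (by decide),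
    mkP ![9, 12, 8, 4, 7, 2, 0, 3, 5, 6, 14, 1, 11, 10, 13] ![6, 11, 5, 7, 3, 8, 9, 4, 2, 0, 13, 12, 1, 14, 10] (by decide) (by decide)]

private lemma hwp14 : HWPStarSolution 15 3 15 14 0 := by
  have h3 : ∀ i : Fin 14, (i : ℕ) < 14 → ∀ x : Fin 15,
      (⇑(sol14 i))^[3] x = x ∧ sol14 i x ≠ x := by decide
  have h15 : ∀ i : Fin 14, 14 ≤ (i : ℕ) → ∀ x : Fin 15,
      (⇑(sol14 i))^[15] x = x ∧ sol14 i x ≠ x ∧ (⇑(sol14 i))^[3] x ≠ x ∧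
        (⇑(sol14 i))^[5] x ≠ x := by decide
  have hu : ∀ x y : Fin 15, x ≠ y → ∃ i : Fin 14, sol14 i x = y ∧ ∀ j : Fin 14, sol14 j x = y → j = i := by decide
  exact ⟨sol14, fun i hi x => per3 _ x (h3 i hi x).1 (h3 i hi x).2,
    fun i hi x => per15 _ x (h15 i hi x).1 (h15 i hi x).2.1 (h15 i hi x).2.2.1
      (h15 i hi x).2.2.2, fun x y hxy => hu x y hxy⟩

/-- Lemma 4.2, case (3,15): if r + s = 14 and r ≠ 13 then
HWP*(15; 3^r, 15^s) has a solution; conversely any solution forces r + s = 14. -/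
theorem hwpStar_15_3_15 (r s : ℕ) :
    (r + s = 14 ∧ r ≠ 13 → HWPStarSolution 15 3 15 r s) ∧
    (HWPStarSolution 15 3 15 r s → r + s = 14) := by
  constructor
  · rintro ⟨h14, hne⟩
    have hs : s = 14 - r := by omega
    subst hs
    have hr : r ≤ 14 := by omega
    interval_cases r
    · exact hwp0
    · exact hwp1
    · exact hwp2
    · exact hwp3
    · exact hwp4
    · exact hwp5
    · exact hwp6
    · exact hwp7
    · exact hwp8
    · exact hwp9
    · exact hwp10
    · exact hwp11
    · exact hwp12
    · exact absurd rfl hne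
    · exact hwp14
  · rintro ⟨σ, h3, h15, hu⟩
    have hnfix : ∀ (i : Fin (r + s)) (x : Fin 15), σ i x ≠ x := by
      intro i x hfix
      have h1 : Function.minimalPeriod ⇑(σ i) x = 1 :=
        Function.minimalPeriod_eq_one_iff_isFixedPt.mpr hfix
      rcases lt_or_ge (i : ℕ) r with h | h
      · have := h3 i h x; omega
      · have := h15 i h x; omega
    let F : Fin (r + s) × Fin 15 → {p : Fin 15 × Fin 15 // p.1 ≠ p.2} :=
      fun p => ⟨(p.2, σ p.1 p.2), fun h => hnfix p.1 p.2 h.symm⟩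
    have hbij : Function.Bijective F := by
      constructor
      · rintro ⟨i, x⟩ ⟨j, y⟩ h
        simp only [F, Subtype.mk.injEq, Prod.mk.injEq] at h
        obtain ⟨hxy, hσ⟩ := h
        subst hxy
        obtain ⟨k, -, huniq⟩ := hu x (σ i x) (Ne.symm (hnfix i x))
        have hi := huniq i rfl
        have hj := huniq j hσ.symm
        simp [hi.trans hj.symm]
      · rintro ⟨⟨x, y⟩, hxy⟩
        obtain ⟨i, hi, -⟩ := hu x y hxy
        exact ⟨(i, x), by simp [F, hi]⟩
    have hcard := Fintype.card_congr (Equiv.ofBijective F hbij)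
    have h210 : Fintype.card {p : Fin 15 × Fin 15 // p.1 ≠ p.2} = 210 := by
      set_option maxRecDepth 40000 in decide
    simp only [Fintype.card_prod, Fintype.card_fin, h210] at hcard
    omega
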